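/- For every real ν and x > 0, the derivative of the Bessel function satisfies |J_ν'(x)| ≤ c_ν x^{ν-1} (1+x)^{-ν+1/2} for some constant c_ν depending only on ν, where J_ν'(x) = J_{ν-1}(x) − ν J_ν(x)/x. -/

import Mathlib

open Real

/-- The Bessel function of the first kind of real order `ν`. -/
noncomputable def besselJ (ν : ℝ) (x : ℝ) : ℝ :=
  ∑' m : ℕ, ((-1 : ℝ) ^ m / ((m.factorial : ℝ) * Real.Gamma (m + ν + 1))) *
    (x / 2) ^ (2 * m) * (x / 2) ^ ν

/-- The derivative of the Bessel function, given by the recurrence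
`J_ν'(x) = J_{ν-1}(x) − ν J_ν(x)/x`. -/
noncomputable def besselJDeriv (ν : ℝ) (x : ℝ) : ℝ :=
  besselJ (ν - 1) x - ν * besselJ ν x / x

/-! ### Auxiliary definitions -/

/-- The coefficients of the Bessel power series. -/
noncomputable def bc (ν : ℝ) (m : ℕ) : ℝ :=
  (-1 : ℝ) ^ m / ((m.factorial : ℝ) * Real.Gamma (m + ν + 1))

/-- The Bessel function written with `rpow` terms. -/
noncomputable def Jr (ν x : ℝ) : ℝ := ∑' m : ℕ, bc ν m * (x/2)^(2*(m:ℝ)+ν)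

/-- Termwise derivative of `Jr`. -/
noncomputable def Jd (ν x : ℝ) : ℝ :=
  ∑' m : ℕ, (bc ν m * (2*(m:ℝ)+ν) * 2⁻¹) * (x/2)^(2*(m:ℝ)+(ν-1))

/-- Termwise second derivative of `Jr`. -/
noncomputable def Jdd (ν x : ℝ) : ℝ :=
  ∑' m : ℕ, (bc ν m * (2*(m:ℝ)+ν) * 2⁻¹ * (2*(m:ℝ)+(ν-1)) * 2⁻¹) * (x/2)^(2*(m:ℝ)+(ν-2))

/-! ### Coefficient bounds -/

lemma one_le_Gamma_of_two_le {x : ℝ} (hx : 2 ≤ x) : 1 ≤ Real.Gamma x := by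
  rcases eq_or_lt_of_le hx with h | h
  · rw [← h, Real.Gamma_two]
  · rw [← Real.Gamma_two]
    exact (Real.Gamma_strictMonoOn_Ici (by norm_num) (le_of_lt h) h).le

lemma bc_bound (ν : ℝ) : ∃ C : ℝ, 0 < C ∧ ∀ m : ℕ, |bc ν m| ≤ C / m.factorial := by
  obtain ⟨N, hN⟩ := exists_nat_ge (1 - ν)
  set C : ℝ := 1 + ∑ m ∈ Finset.range N, |bc ν m| * m.factorial with hC
  have hCpos : 0 < C := by
    have : 0 ≤ ∑ m ∈ Finset.range N, |bc ν m| * m.factorial :=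
      Finset.sum_nonneg fun m _ => mul_nonneg (abs_nonneg _) (by positivity)
    linarith
  refine ⟨C, hCpos, fun m => ?_⟩
  have hfac : (0:ℝ) < m.factorial := by positivity
  have hC1 : 1 ≤ C := by
    have : 0 ≤ ∑ m ∈ Finset.range N, |bc ν m| * m.factorial :=
      Finset.sum_nonneg fun m _ => mul_nonneg (abs_nonneg _) (by positivity)
    linarith
  rcases lt_or_ge m N with hm | hm
  · have h1 : |bc ν m| * m.factorial ≤ C := by
      have : |bc ν m| * m.factorial ≤ ∑ k ∈ Finset.range N, |bc ν k| * k.factorial :=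
        Finset.single_le_sum (f := fun k => |bc ν k| * (k.factorial : ℝ))
          (fun k _ => mul_nonneg (abs_nonneg _) (by positivity)) (Finset.mem_range.mpr hm)
      linarith
    calc |bc ν m| = |bc ν m| * m.factorial * (m.factorial : ℝ)⁻¹ := by
            field_simp
      _ ≤ C * (m.factorial : ℝ)⁻¹ := by
            exact mul_le_mul_of_nonneg_right h1 (by positivity)
      _ = C / m.factorial := by rw [div_eq_mul_inv]
  · have hge : (2:ℝ) ≤ m + ν + 1 := by
      have : (N:ℝ) ≤ m := Nat.cast_le.mpr hm
      linarith
    have hΓ : 1 ≤ Real.Gamma (m + ν + 1) := one_le_Gamma_of_two_le hge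
    have : |bc ν m| ≤ (m.factorial : ℝ)⁻¹ := by
      rw [bc, abs_div, abs_pow, abs_neg, abs_one, one_pow]
      rw [abs_mul]
      rw [abs_of_pos hfac, abs_of_pos (lt_of_lt_of_le one_pos hΓ)]
      rw [div_le_iff₀ (by positivity)]
      calc (1:ℝ) = (m.factorial : ℝ)⁻¹ * m.factorial := by field_simp
        _ ≤ (m.factorial : ℝ)⁻¹ * ((m.factorial : ℝ) * Real.Gamma (m+ν+1)) := by
            apply mul_le_mul_of_nonneg_left _ (by positivity)
            nlinarith
    calc |bc ν m| ≤ (m.factorial : ℝ)⁻¹ := this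
      _ = 1 / m.factorial := by rw [one_div]
      _ ≤ C / m.factorial := by gcongr

lemma d_bounds (ν : ℝ) : ∃ D : ℝ, 0 < D ∧
    (∀ m : ℕ, |bc ν m| ≤ D * 16^m / m.factorial) ∧
    (∀ m : ℕ, |bc ν m * (2*(m:ℝ)+ν) * 2⁻¹| ≤ D * 16^m / m.factorial) ∧
    (∀ m : ℕ, |bc ν m * (2*(m:ℝ)+ν) * 2⁻¹ * (2*(m:ℝ)+(ν-1)) * 2⁻¹| ≤ D * 16^m / m.factorial) ∧
    (∀ m : ℕ, |4*(m:ℝ)*((m:ℝ)+ν) * bc ν m| ≤ D * 16^m / m.factorial) := by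
  obtain ⟨C, hC, hb⟩ := bc_bound ν
  have g1 : (1:ℝ) ≤ 2+|ν| := by nlinarith [abs_nonneg ν]
  have g2 : (1:ℝ) ≤ 3+|ν| := by nlinarith [abs_nonneg ν]
  have key : ∀ m : ℕ, (m:ℝ) ≤ 2^m ∧ (1:ℝ) ≤ 2^m ∧ (2:ℝ)^m ≤ 16^m ∧ (4:ℝ)^m ≤ 16^m ∧
      |2*(m:ℝ)+ν| ≤ (2+|ν|) * 2^m ∧ |2*(m:ℝ)+(ν-1)| ≤ (3+|ν|) * 2^m ∧
      |(m:ℝ)+ν| ≤ (1+|ν|) * 2^m := by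
    intro m
    have hm : (m:ℝ) ≤ 2^m := by exact_mod_cast (Nat.lt_two_pow_self (n := m)).le
    have h1 : (1:ℝ) ≤ 2^m := one_le_pow₀ (by norm_num)
    have h216 : (2:ℝ)^m ≤ 16^m := pow_le_pow_left₀ (by norm_num) (by norm_num) m
    have h416 : (4:ℝ)^m ≤ 16^m := pow_le_pow_left₀ (by norm_num) (by norm_num) m
    refine ⟨hm, h1, h216, h416, ?_, ?_, ?_⟩
    · calc |2*(m:ℝ)+ν| ≤ |2*(m:ℝ)| + |ν| := abs_add_le _ _
        _ = 2*(m:ℝ) + |ν| := by rw [abs_of_nonneg (by positivity)]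
        _ ≤ (2+|ν|) * 2^m := by nlinarith [abs_nonneg ν]
    · calc |2*(m:ℝ)+(ν-1)| ≤ |2*(m:ℝ)| + |ν-1| := abs_add_le _ _
        _ ≤ 2*(m:ℝ) + (|ν| + 1) := by
            rw [abs_of_nonneg (by positivity : (0:ℝ) ≤ 2*(m:ℝ))]
            have h2 := abs_add_le ν (-1)
            rw [show ν + (-1:ℝ) = ν - 1 by ring, abs_neg, abs_one] at h2
            linarith
        _ ≤ (3+|ν|) * 2^m := by nlinarith [abs_nonneg ν]
    · calc |(m:ℝ)+ν| ≤ |(m:ℝ)| + |ν| := abs_add_le _ _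
        _ = (m:ℝ) + |ν| := by rw [abs_of_nonneg (by positivity)]
        _ ≤ (1+|ν|) * 2^m := by nlinarith [abs_nonneg ν]
  set D : ℝ := 4 * C * (2+|ν|) * (3+|ν|) with hD
  have hDpos : 0 < D := by positivity
  have absorb : ∀ (m : ℕ) (Q : ℝ), 0 ≤ Q → Q ≤ 4*(2+|ν|)*(3+|ν|)*16^m →
      (C / m.factorial) * Q ≤ D * 16^m / m.factorial := by
    intro m Q hQ0 hQle
    have hfac : (0:ℝ) < m.factorial := by positivity
    calc (C / m.factorial) * Q = C * Q / m.factorial := by ring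
      _ ≤ C * (4*(2+|ν|)*(3+|ν|)*16^m) / m.factorial := by gcongr
      _ = D * 16^m / m.factorial := by rw [hD]; ring
  refine ⟨D, hDpos, fun m => ?_, fun m => ?_, fun m => ?_, fun m => ?_⟩ <;>
    obtain ⟨hm, h1, h216, h416, hnu, hnu1, hnu2⟩ := key m <;>
    have hbc := hb m
  · calc |bc ν m| ≤ C / m.factorial := hb m
      _ = (C / m.factorial) * 1 := (mul_one _).symm
      _ ≤ D * 16^m / m.factorial := by
          apply absorb m 1 zero_le_one
          have h116 : (1:ℝ) ≤ 16^m := one_le_pow₀ (by norm_num)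
          calc (1:ℝ) = 1*1*1*1 := by ring
            _ ≤ 4*(2+|ν|)*(3+|ν|)*16^m := by
                gcongr <;> first | norm_num | exact g1 | exact g2 | exact h116
  · have h12 : |(2:ℝ)⁻¹| ≤ 1 := by rw [abs_of_pos (by norm_num : (0:ℝ) < 2⁻¹)]; norm_num
    calc |bc ν m * (2*(m:ℝ)+ν) * 2⁻¹| = |bc ν m| * |2*(m:ℝ)+ν| * |(2:ℝ)⁻¹| := by
          rw [abs_mul, abs_mul]
      _ ≤ (C / m.factorial) * ((2+|ν|) * 2^m) * 1 := by gcongr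
      _ = (C / m.factorial) * ((2+|ν|) * 2^m) := by ring
      _ ≤ D * 16^m / m.factorial := by
          apply absorb m _ (by positivity)
          calc (2+|ν|) * 2^m = 1*(2+|ν|)*1*2^m := by ring
            _ ≤ 4*(2+|ν|)*(3+|ν|)*16^m := by
                gcongr <;> first | norm_num | exact g2 | exact h216
  · have h12 : |(2:ℝ)⁻¹| ≤ 1 := by rw [abs_of_pos (by norm_num : (0:ℝ) < 2⁻¹)]; norm_num
    calc |bc ν m * (2*(m:ℝ)+ν) * 2⁻¹ * (2*(m:ℝ)+(ν-1)) * 2⁻¹|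
        = |bc ν m| * |2*(m:ℝ)+ν| * |(2:ℝ)⁻¹| * |2*(m:ℝ)+(ν-1)| * |(2:ℝ)⁻¹| := by
          rw [abs_mul, abs_mul, abs_mul, abs_mul]
      _ ≤ (C / m.factorial) * ((2+|ν|) * 2^m) * 1 * ((3+|ν|) * 2^m) * 1 := by gcongr
      _ = (C / m.factorial) * ((2+|ν|) * (3+|ν|) * (2^m * 2^m)) := by ring
      _ ≤ D * 16^m / m.factorial := by
          apply absorb m _ (by positivity)
          have h44 : (2:ℝ)^m * 2^m = 4^m := by rw [← mul_pow]; norm_num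
      
          calc (2+|ν|) * (3+|ν|) * (2^m * 2^m) = 1*(2+|ν|)*(3+|ν|)*4^m := by
                rw [h44]; ring
            _ ≤ 4*(2+|ν|)*(3+|ν|)*16^m := by
                gcongr <;> first | norm_num | exact h416
  · calc |4*(m:ℝ)*((m:ℝ)+ν) * bc ν m|
        = |4*(m:ℝ)| * |(m:ℝ)+ν| * |bc ν m| := by rw [abs_mul, abs_mul]
      _ = 4*(m:ℝ) * |(m:ℝ)+ν| * |bc ν m| := by
          rw [abs_of_nonneg (by positivity : (0:ℝ) ≤ 4*(m:ℝ))]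
      _ ≤ 4*(2:ℝ)^m * ((1+|ν|) * 2^m) * (C / m.factorial) := by gcongr
      _ = (C / m.factorial) * (4 * (1+|ν|) * (2^m * 2^m)) := by ring
      _ ≤ D * 16^m / m.factorial := by
          apply absorb m _ (by positivity)
          have h44 : (2:ℝ)^m * 2^m = 4^m := by rw [← mul_pow]; norm_num
          calc 4 * (1+|ν|) * (2^m * 2^m) = 4*(1+|ν|)*1*4^m := by rw [h44]; ring
            _ ≤ 4*(2+|ν|)*(3+|ν|)*16^m := by
                gcongr <;> first | norm_num | exact g2 | exact h416 |
                  nlinarith [abs_nonneg ν]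

/-! ### Summability and differentiation of the series -/

lemma hasDerivAt_term (c p x : ℝ) (hx : 0 < x) :
    HasDerivAt (fun y : ℝ => c * (y/2)^p) (c * p * 2⁻¹ * (x/2)^(p-1)) x := by
  have h1 : HasDerivAt (fun y : ℝ => y/2) (1/2) x := (hasDerivAt_id x).div_const 2
  have h2 : HasDerivAt (fun z : ℝ => z ^ p) (p * (x/2)^(p-1)) (x/2) :=
    Real.hasDerivAt_rpow_const (Or.inl (by positivity))
  have h3 := (h2.comp x h1).const_mul c
  refine h3.congr_deriv (Eq.symm ?_)
  ring

lemma exists_summable_bound (d : ℕ → ℝ) (D : ℝ) (hd : ∀ m, |d m| ≤ D * 16^m / m.factorial)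
    (a b q : ℝ) (ha : 0 < a) :
    ∃ u : ℕ → ℝ, Summable u ∧
      ∀ (m : ℕ), ∀ y ∈ Set.Ioo a b, |d m * (y/2)^(2*(m:ℝ)+q)| ≤ u m := by
  set M : ℝ := max ((a/2)^q) ((b/2)^q) with hM
  refine ⟨fun m => D * M * (16*(b/2)^2)^m / m.factorial, ?_, ?_⟩
  · have := (Real.summable_pow_div_factorial (16*(b/2)^2)).mul_left (D * M)
    apply this.congr
    intro m
    rw [mul_div_assoc]
  · intro m y hy
    obtain ⟨hy1, hy2⟩ := hy
    have hy0 : 0 < y := ha.trans hy1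
    have hb0 : 0 < b := hy0.trans hy2
    have hsplit : (y/2)^(2*(m:ℝ)+q) = ((y/2)^2)^m * (y/2)^q := by
      rw [Real.rpow_add (by positivity)]
      congr 1
      rw [show (2*(m:ℝ)) = ((2*m : ℕ) : ℝ) by push_cast; ring,
        Real.rpow_natCast, pow_mul]
    have h1 : ((y/2)^2 : ℝ)^m ≤ ((b/2)^2)^m := by
      apply pow_le_pow_left₀ (by positivity)
      nlinarith
    have h2 : (y/2 : ℝ)^q ≤ M := by
      rcases le_or_gt 0 q with hq | hq
      · exact le_max_of_le_right (Real.rpow_le_rpow (by positivity) (by linarith) hq)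
      · refine le_max_of_le_left ?_
        apply Real.rpow_le_rpow_of_nonpos (by positivity) (by linarith) hq.le
    have hMpos : 0 < M := lt_of_lt_of_le (by positivity : (0:ℝ) < (a/2)^q) (le_max_left _ _)
    rw [abs_mul]
    have h3 : |(y/2)^(2*(m:ℝ)+q)| ≤ ((b/2)^2)^m * M := by
      rw [abs_of_pos (by positivity : (0:ℝ) < (y/2)^(2*(m:ℝ)+q)), hsplit]
      have : (0:ℝ) ≤ (y/2)^q := by positivity
      apply mul_le_mul h1 h2 this (by positivity)
    calc |d m| * |(y/2)^(2*(m:ℝ)+q)| ≤ (D * 16^m / m.factorial) * (((b/2)^2)^m * M) :=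
          mul_le_mul (hd m) h3 (abs_nonneg _) (le_trans (abs_nonneg _) (hd m))
      _ = D * M * (16*(b/2)^2)^m / m.factorial := by rw [mul_pow]; ring

lemma summable_term (d : ℕ → ℝ) (D : ℝ) (hd : ∀ m, |d m| ≤ D * 16^m / m.factorial)
    (q x : ℝ) (hx : 0 < x) : Summable (fun m : ℕ => d m * (x/2)^(2*(m:ℝ)+q)) := by
  obtain ⟨u, hu, hub⟩ := exists_summable_bound d D hd (x/2) (x+1) q (by positivity)
  exact Summable.of_norm_bounded hu
    (fun m => by simpa only [Real.norm_eq_abs] using hub m x ⟨by linarith, by linarith⟩)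

lemma hasDerivAt_Jr (ν x : ℝ) (hx : 0 < x) : HasDerivAt (Jr ν) (Jd ν x) x := by
  obtain ⟨D, hD, h0, h1, h2, h3⟩ := d_bounds ν
  obtain ⟨u, hu, hub⟩ := exists_summable_bound (fun m => bc ν m * (2*(m:ℝ)+ν) * 2⁻¹) D h1
    (x/2) (x+1) (ν-1) (by positivity)
  have hx' : x ∈ Set.Ioo (x/2) (x+1) := ⟨by linarith, by linarith⟩
  have hderiv : ∀ (m : ℕ), ∀ y ∈ Set.Ioo (x/2) (x+1),
      HasDerivAt (fun z => bc ν m * (z/2)^(2*(m:ℝ)+ν))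
        ((bc ν m * (2*(m:ℝ)+ν) * 2⁻¹) * (y/2)^(2*(m:ℝ)+(ν-1))) y := by
    intro m y hy
    have hy0 : 0 < y := by have := hy.1; linarith
    have h := hasDerivAt_term (bc ν m) (2*(m:ℝ)+ν) y hy0
    have hexp : 2*(m:ℝ)+ν-1 = 2*(m:ℝ)+(ν-1) := by ring
    rwa [hexp] at h
  exact hasDerivAt_tsum_of_isPreconnected hu isOpen_Ioo (convex_Ioo _ _).isPreconnected
    hderiv (fun m y hy => by simpa only [Real.norm_eq_abs] using hub m y hy) hx'
    (summable_term (fun m => bc ν m) D h0 ν x hx) hx'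

lemma hasDerivAt_Jd (ν x : ℝ) (hx : 0 < x) : HasDerivAt (Jd ν) (Jdd ν x) x := by
  obtain ⟨D, hD, h0, h1, h2, h3⟩ := d_bounds ν
  obtain ⟨u, hu, hub⟩ := exists_summable_bound
    (fun m => bc ν m * (2*(m:ℝ)+ν) * 2⁻¹ * (2*(m:ℝ)+(ν-1)) * 2⁻¹) D h2
    (x/2) (x+1) (ν-2) (by positivity)
  have hx' : x ∈ Set.Ioo (x/2) (x+1) := ⟨by linarith, by linarith⟩
  have hderiv : ∀ (m : ℕ), ∀ y ∈ Set.Ioo (x/2) (x+1),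
      HasDerivAt (fun z => (bc ν m * (2*(m:ℝ)+ν) * 2⁻¹) * (z/2)^(2*(m:ℝ)+(ν-1)))
        ((bc ν m * (2*(m:ℝ)+ν) * 2⁻¹ * (2*(m:ℝ)+(ν-1)) * 2⁻¹) * (y/2)^(2*(m:ℝ)+(ν-2))) y := by
    intro m y hy
    have hy0 : 0 < y := by have := hy.1; linarith
    have h := hasDerivAt_term (bc ν m * (2*(m:ℝ)+ν) * 2⁻¹) (2*(m:ℝ)+(ν-1)) y hy0
    have hexp : 2*(m:ℝ)+(ν-1)-1 = 2*(m:ℝ)+(ν-2) := by ring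
    rwa [hexp] at h
  exact hasDerivAt_tsum_of_isPreconnected hu isOpen_Ioo (convex_Ioo _ _).isPreconnected
    hderiv (fun m y hy => by simpa only [Real.norm_eq_abs] using hub m y hy) hx'
    (summable_term (fun m => bc ν m * (2*(m:ℝ)+ν) * 2⁻¹) D h1 (ν-1) x hx) hx'

/-! ### The Bessel differential equation -/

lemma gamma_div (s : ℝ) : s / Real.Gamma (s+1) = 1 / Real.Gamma s := by
  by_cases hs : s = 0
  · simp [hs, Real.Gamma_zero]
  · rw [Real.Gamma_add_one hs]
    rcases eq_or_ne (Real.Gamma s) 0 with h | h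
    · simp [h]
    · field_simp

lemma bc_rec (ν : ℝ) (m : ℕ) :
    bc ν (m+1) * (((m:ℝ)+1) * (((m:ℝ)+1)+ν)) = - bc ν m := by
  have key := gamma_div ((m:ℝ)+ν+1)
  have hm1 : ((m:ℝ)+1) ≠ 0 := by positivity
  simp only [bc, Nat.factorial_succ]
  push_cast
  have harg : ((m:ℝ)+1)+ν+1 = ((m:ℝ)+ν+1)+1 := by ring
  rw [harg]
  set s := (m:ℝ)+ν+1 with hs
  have hsub : ((m:ℝ)+1)+ν = s := by rw [hs]; ring
  rw [hsub]
  set G1 := Real.Gamma (s+1)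
  set G0 := Real.Gamma s
  have step1 : (-1:ℝ)^(m+1) / ((((m:ℝ)+1) * m.factorial) * G1) * (((m:ℝ)+1) * s)
      = ((-1:ℝ)^(m+1) * s) / ((m.factorial : ℝ) * G1) := by
    rw [div_mul_eq_mul_div]
    rw [show (-1:ℝ)^(m+1) * (((m:ℝ)+1) * s) = ((m:ℝ)+1) * ((-1:ℝ)^(m+1) * s) by ring]
    rw [show (((m:ℝ)+1) * m.factorial) * G1 = ((m:ℝ)+1) * ((m.factorial : ℝ) * G1) by ring]
    exact mul_div_mul_left _ _ hm1
  rw [step1]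
  have step2 : ((-1:ℝ)^(m+1) * s) / ((m.factorial : ℝ) * G1)
      = (-1:ℝ)^(m+1) / (m.factorial : ℝ) * (s / G1) := by ring
  rw [step2, key]
  rw [pow_succ]
  ring

lemma ode (ν x : ℝ) (hx : 0 < x) :
    x^2 * Jdd ν x + x * Jd ν x + (x^2 - ν^2) * Jr ν x = 0 := by
  obtain ⟨D, hD, h0, h1, h2, h3⟩ := d_bounds ν
  set w := x/2 with hwdef
  have hw : 0 < w := by positivity
  have S0 : Summable (fun m : ℕ => bc ν m * w^(2*(m:ℝ)+ν)) :=
    summable_term _ D h0 ν x hx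
  have S1 : Summable (fun m : ℕ => (bc ν m * (2*(m:ℝ)+ν) * 2⁻¹) * w^(2*(m:ℝ)+(ν-1))) :=
    summable_term _ D h1 (ν-1) x hx
  have S2 : Summable (fun m : ℕ =>
      (bc ν m * (2*(m:ℝ)+ν) * 2⁻¹ * (2*(m:ℝ)+(ν-1)) * 2⁻¹) * w^(2*(m:ℝ)+(ν-2))) :=
    summable_term _ D h2 (ν-2) x hx
  have SF : Summable (fun m : ℕ => (4*(m:ℝ)*((m:ℝ)+ν) * bc ν m) * w^(2*(m:ℝ)+ν)) :=
    summable_term _ D h3 ν x hx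
  have SG : Summable (fun m : ℕ => (4 * bc ν m) * w^(2*(m:ℝ)+(ν+2))) := by
    apply ((summable_term _ D h0 (ν+2) x hx).mul_left 4).congr
    intro m; ring
  have emul : ∀ a : ℝ, w^a * w = w^(a+1) := by
    intro a
    rw [Real.rpow_add hw, Real.rpow_one]
  have e2 : ∀ a : ℝ, w^a * x^2 = 4 * w^(a+2) := by
    intro a
    have : x^2 = 4 * (w * w) := by rw [hwdef]; ring
    rw [this, show w^a * (4*(w*w)) = 4 * (w^a * w * w) by ring, emul, emul]
    ring_nf
  have e1 : ∀ a : ℝ, w^a * x = 2 * w^(a+1) := by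
    intro a
    have : x = 2 * w := by rw [hwdef]; ring
    rw [this, show w^a * (2*w) = 2 * (w^a * w) by ring, emul]
  have hJdd : x^2 * Jdd ν x = ∑' m : ℕ,
      (x^2 * ((bc ν m * (2*(m:ℝ)+ν) * 2⁻¹ * (2*(m:ℝ)+(ν-1)) * 2⁻¹) * w^(2*(m:ℝ)+(ν-2)))) := by
    rw [Jdd, tsum_mul_left]
  have hJd : x * Jd ν x = ∑' m : ℕ,
      (x * ((bc ν m * (2*(m:ℝ)+ν) * 2⁻¹) * w^(2*(m:ℝ)+(ν-1)))) := by
    rw [Jd, tsum_mul_left]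
  have hJr : (x^2 - ν^2) * Jr ν x = ∑' m : ℕ,
      ((x^2 - ν^2) * (bc ν m * w^(2*(m:ℝ)+ν))) := by
    rw [Jr, tsum_mul_left]
  rw [hJdd, hJd, hJr]
  rw [← Summable.tsum_add (S2.mul_left (x^2)) (S1.mul_left x),
    ← Summable.tsum_add ((S2.mul_left (x^2)).add (S1.mul_left x)) (S0.mul_left (x^2 - ν^2))]
  have hT : ∀ m : ℕ,
      x^2 * ((bc ν m * (2*(m:ℝ)+ν) * 2⁻¹ * (2*(m:ℝ)+(ν-1)) * 2⁻¹) * w^(2*(m:ℝ)+(ν-2)))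
      + x * ((bc ν m * (2*(m:ℝ)+ν) * 2⁻¹) * w^(2*(m:ℝ)+(ν-1)))
      + (x^2 - ν^2) * (bc ν m * w^(2*(m:ℝ)+ν))
      = (4*(m:ℝ)*((m:ℝ)+ν) * bc ν m) * w^(2*(m:ℝ)+ν) + (4 * bc ν m) * w^(2*(m:ℝ)+(ν+2)) := by
    intro m
    have k2 := e2 (2*(m:ℝ)+(ν-2))
    have k1 := e1 (2*(m:ℝ)+(ν-1))
    have k0 := e2 (2*(m:ℝ)+ν)
    rw [show (2*(m:ℝ)+(ν-2))+2 = 2*(m:ℝ)+ν by ring] at k2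
    rw [show (2*(m:ℝ)+(ν-1))+1 = 2*(m:ℝ)+ν by ring] at k1
    rw [show (2*(m:ℝ)+ν)+2 = 2*(m:ℝ)+(ν+2) by ring] at k0
    calc x^2 * ((bc ν m * (2*(m:ℝ)+ν) * 2⁻¹ * (2*(m:ℝ)+(ν-1)) * 2⁻¹) * w^(2*(m:ℝ)+(ν-2)))
          + x * ((bc ν m * (2*(m:ℝ)+ν) * 2⁻¹) * w^(2*(m:ℝ)+(ν-1)))
          + (x^2 - ν^2) * (bc ν m * w^(2*(m:ℝ)+ν))
        = (bc ν m * (2*(m:ℝ)+ν) * 2⁻¹ * (2*(m:ℝ)+(ν-1)) * 2⁻¹) * (w^(2*(m:ℝ)+(ν-2)) * x^2)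
          + (bc ν m * (2*(m:ℝ)+ν) * 2⁻¹) * (w^(2*(m:ℝ)+(ν-1)) * x)
          + bc ν m * (w^(2*(m:ℝ)+ν) * x^2) - ν^2 * (bc ν m * w^(2*(m:ℝ)+ν)) := by ring
      _ = _ := by rw [k2, k1, k0]; ring
  rw [tsum_congr hT]
  rw [Summable.tsum_add SF SG]
  have hshift : ∑' m : ℕ, (4*(m:ℝ)*((m:ℝ)+ν) * bc ν m) * w^(2*(m:ℝ)+ν)
      = ∑' m : ℕ, (4*((m:ℝ)+1)*(((m:ℝ)+1)+ν) * bc ν (m+1)) * w^(2*(m:ℝ)+(ν+2)) := by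
    rw [Summable.tsum_eq_zero_add SF]
    simp only [Nat.cast_zero, mul_zero, zero_mul, zero_add, Nat.cast_add, Nat.cast_one]
    apply tsum_congr
    intro m
    rw [show 2*((m:ℝ)+1)+ν = 2*(m:ℝ)+(ν+2) by ring]
  rw [hshift, ← Summable.tsum_add]
  · rw [show (0:ℝ) = ∑' (_ : ℕ), (0:ℝ) by rw [tsum_zero]]
    apply tsum_congr
    intro m
    have hrec := bc_rec ν m
    have hc : 4*((m:ℝ)+1)*(((m:ℝ)+1)+ν) * bc ν (m+1) + 4 * bc ν m = 0 := by
      nlinarith [hrec]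
    calc (4*((m:ℝ)+1)*(((m:ℝ)+1)+ν) * bc ν (m+1)) * w^(2*(m:ℝ)+(ν+2))
          + (4 * bc ν m) * w^(2*(m:ℝ)+(ν+2))
        = (4*((m:ℝ)+1)*(((m:ℝ)+1)+ν) * bc ν (m+1) + 4 * bc ν m) * w^(2*(m:ℝ)+(ν+2)) := by
          ring
      _ = 0 := by rw [hc]; ring
  · apply (SF.comp_injective (Nat.succ_injective)).congr
    intro m
    simp only [Function.comp_apply, Nat.succ_eq_add_one, Nat.cast_add, Nat.cast_one]
    rw [show 2*((m:ℝ)+1)+ν = 2*(m:ℝ)+(ν+2) by ring]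
  · exact SG

/-! ### Energy estimates -/

noncomputable def UU (ν x : ℝ) : ℝ := Real.sqrt x * Jr ν x
noncomputable def VV (ν x : ℝ) : ℝ := Jr ν x / (2 * Real.sqrt x) + Real.sqrt x * Jd ν x
noncomputable def En (ν x : ℝ) : ℝ := (VV ν x)^2 + (UU ν x)^2

lemma hasDerivAt_UU (ν x : ℝ) (hx : 0 < x) : HasDerivAt (UU ν) (VV ν x) x := by
  have h := (Real.hasDerivAt_sqrt hx.ne').mul (hasDerivAt_Jr ν x hx)
  refine h.congr_deriv (Eq.symm ?_)
  unfold VV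
  ring

lemma hasDerivAt_VV (ν x : ℝ) (hx : 0 < x) :
    HasDerivAt (VV ν) (-(1 + (1/4 - ν^2)/x^2) * UU ν x) x := by
  have hs0 : Real.sqrt x ≠ 0 := (Real.sqrt_pos.mpr hx).ne'
  have hsq : Real.sqrt x ^ 2 = x := Real.sq_sqrt hx.le
  have h1 := (hasDerivAt_Jr ν x hx).div ((Real.hasDerivAt_sqrt hx.ne').const_mul 2)
    (by positivity)
  have h2 := (Real.hasDerivAt_sqrt hx.ne').mul (hasDerivAt_Jd ν x hx)
  have h := h1.add h2
  refine h.congr_deriv (Eq.symm ?_)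
  have hode := ode ν x hx
  simp only [UU]
  rw [← hsq] at hode ⊢
  set s := Real.sqrt x
  field_simp
  ring_nf
  ring_nf at hode
  rw [Real.sqrt_sq (Real.sqrt_nonneg x : 0 ≤ s)]
  linear_combination (-16*s^4) * hode

lemma hasDerivAt_En (ν x : ℝ) (hx : 0 < x) :
    HasDerivAt (En ν) (-2*((1/4 - ν^2)/x^2) * (UU ν x * VV ν x)) x := by
  have h := ((hasDerivAt_VV ν x hx).pow 2).add ((hasDerivAt_UU ν x hx).pow 2)
  refine h.congr_deriv (Eq.symm ?_)
  have hx2 : x^2 ≠ 0 := by positivity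
  field_simp
  ring

lemma En_le (ν x : ℝ) (hx : 1 ≤ x) :
    En ν x ≤ En ν 1 * Real.exp |1/4 - ν^2| := by
  set b := (1/4 - ν^2 : ℝ) with hb
  set F : ℝ → ℝ := fun y => En ν y * Real.exp (|b| / y) with hF
  have hder : ∀ y : ℝ, 0 < y → HasDerivAt F
      (-2*(b/y^2) * (UU ν y * VV ν y) * Real.exp (|b|/y)
        + En ν y * (Real.exp (|b|/y) * (|b| * -(y^2)⁻¹))) y := by
    intro y hy
    have hinv : HasDerivAt (fun z : ℝ => |b| / z) (|b| * -(y^2)⁻¹) y := by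
      simpa [div_eq_mul_inv] using (hasDerivAt_inv hy.ne').const_mul |b|
    have hexp := (Real.hasDerivAt_exp (|b|/y)).comp y hinv
    exact (hasDerivAt_En ν y hy).mul hexp
  have hanti : AntitoneOn F (Set.Ici 1) := by
    apply antitoneOn_of_deriv_nonpos (convex_Ici 1)
    · intro y hy
      exact (hder y (by exact lt_of_lt_of_le one_pos hy)).continuousAt.continuousWithinAt
    · intro y hy
      rw [interior_Ici] at hy
      exact (hder y (lt_trans one_pos hy)).differentiableAt.differentiableWithinAt
    · intro y hy
      rw [interior_Ici] at hy
      have hy0 : 0 < y := lt_trans one_pos hy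
      rw [(hder y hy0).deriv]
      have hkey : 0 ≤ |b| * ((UU ν y)^2 + (VV ν y)^2) + 2*b*(UU ν y * VV ν y) := by
        nlinarith [mul_nonneg (sub_nonneg.mpr (neg_abs_le b)) (sq_nonneg (UU ν y + VV ν y)),
          mul_nonneg (sub_nonneg.mpr (le_abs_self b)) (sq_nonneg (UU ν y - VV ν y))]
      have hexpp : 0 < Real.exp (|b|/y) := Real.exp_pos _
      have hy2 : 0 < y^2 := by positivity
      have hEn : En ν y = (VV ν y)^2 + (UU ν y)^2 := rfl
      rw [hEn]
      rw [div_eq_mul_inv, div_eq_mul_inv]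
      have expand : -2*(b*(y^2)⁻¹) * (UU ν y * VV ν y) * Real.exp (|b| * y⁻¹)
          + ((VV ν y)^2 + (UU ν y)^2) * (Real.exp (|b| * y⁻¹) * (|b| * -(y^2)⁻¹))
          = -(Real.exp (|b| * y⁻¹) * (y^2)⁻¹) *
            (|b| * ((UU ν y)^2 + (VV ν y)^2) + 2*b*(UU ν y * VV ν y)) := by ring
      rw [expand]
      apply mul_nonpos_of_nonpos_of_nonneg _ hkey
      simp only [neg_nonpos]
      positivity
  have h1 : En ν x ≤ F x := by
    have : (1:ℝ) ≤ Real.exp (|b|/x) := by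
      rw [← Real.exp_zero]
      apply Real.exp_le_exp.mpr
      positivity
    have hEn0 : 0 ≤ En ν x := by
      have : En ν x = (VV ν x)^2 + (UU ν x)^2 := rfl
      rw [this]; positivity
    calc En ν x = En ν x * 1 := (mul_one _).symm
      _ ≤ F x := by exact mul_le_mul_of_nonneg_left this hEn0
  have h2 : F x ≤ F 1 := hanti (Set.mem_Ici.mpr le_rfl) (Set.mem_Ici.mpr hx) hx
  calc En ν x ≤ F 1 := h1.trans h2
    _ = En ν 1 * Real.exp |b| := by rw [hF]; simp

lemma Jr_decay (ν : ℝ) : ∃ B : ℝ, 0 < B ∧ ∀ x : ℝ, 1 ≤ x →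
    |Jr ν x| ≤ B / Real.sqrt x := by
  set K := Real.sqrt (En ν 1 * Real.exp |1/4 - ν^2|) + 1 with hK
  refine ⟨K, by positivity, fun x hx => ?_⟩
  have hx0 : 0 < x := lt_of_lt_of_le one_pos hx
  have hsx : 0 < Real.sqrt x := Real.sqrt_pos.mpr hx0
  have h1 : (UU ν x)^2 ≤ En ν x := by
    have : En ν x = (VV ν x)^2 + (UU ν x)^2 := rfl
    nlinarith [sq_nonneg (VV ν x)]
  have h2 := En_le ν x hx
  have h3 : |UU ν x| ≤ K := by
    rw [← Real.sqrt_sq_eq_abs]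
    calc Real.sqrt ((UU ν x)^2) ≤ Real.sqrt (En ν 1 * Real.exp |1/4 - ν^2|) :=
          Real.sqrt_le_sqrt (h1.trans h2)
      _ ≤ K := by rw [hK]; linarith
  have h4 : |UU ν x| = Real.sqrt x * |Jr ν x| := by
    rw [UU, abs_mul, abs_of_pos hsx]
  rw [le_div_iff₀ hsx]
  calc |Jr ν x| * Real.sqrt x = |UU ν x| := by rw [h4]; ring
    _ ≤ K := h3

/-! ### Conclusion -/

lemma besselJ_eq' (ν x : ℝ) (hx : 0 < x) : besselJ ν x = Jr ν x := by
  apply tsum_congr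
  intro m
  have hw : (0:ℝ) < x/2 := by positivity
  show ((-1 : ℝ) ^ m / ((m.factorial : ℝ) * Real.Gamma (m + ν + 1))) *
    (x / 2) ^ (2 * m) * (x / 2) ^ ν = bc ν m * (x/2)^(2*(m:ℝ)+ν)
  rw [mul_assoc, ← Real.rpow_natCast (x/2) (2*m), ← Real.rpow_add hw,
    show ((2*m : ℕ):ℝ) + ν = 2*(m:ℝ)+ν by push_cast; ring, bc]

lemma Jr_small (ν : ℝ) : ∃ A : ℝ, 0 < A ∧ ∀ x : ℝ, 0 < x → x ≤ 1 →
    |Jr ν x| ≤ A * (x/2)^ν := by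
  obtain ⟨C, hC, hb⟩ := bc_bound ν
  have hsumC : Summable (fun m : ℕ => C / m.factorial) := by
    apply ((Real.summable_pow_div_factorial 1).mul_left C).congr
    intro m
    rw [one_pow, mul_one_div]
  have hsumabs : Summable (fun m : ℕ => |bc ν m|) :=
    Summable.of_nonneg_of_le (fun m => abs_nonneg _) hb hsumC
  have htsum0 : 0 ≤ ∑' m : ℕ, |bc ν m| := tsum_nonneg (fun m => abs_nonneg _)
  refine ⟨(∑' m : ℕ, |bc ν m|) + 1, by positivity, fun x hx hx1 => ?_⟩
  have hw : (0:ℝ) < x/2 := by positivity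
  have hterm : ∀ m : ℕ, ‖bc ν m * (x/2)^(2*(m:ℝ)+ν)‖ ≤ |bc ν m| * (x/2)^ν := by
    intro m
    rw [Real.norm_eq_abs, abs_mul, abs_of_pos (Real.rpow_pos_of_pos hw _)]
    have hsplit : (x/2)^(2*(m:ℝ)+ν) = ((x/2)^2)^m * (x/2)^ν := by
      rw [Real.rpow_add hw]
      congr 1
      rw [show (2*(m:ℝ)) = ((2*m : ℕ):ℝ) by push_cast; ring, Real.rpow_natCast, pow_mul]
    rw [hsplit]
    have h1 : ((x/2)^2 : ℝ)^m ≤ 1 := pow_le_one₀ (by positivity) (by nlinarith)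
    calc |bc ν m| * (((x/2)^2)^m * (x/2)^ν) ≤ |bc ν m| * (1 * (x/2)^ν) := by
          gcongr
      _ = |bc ν m| * (x/2)^ν := by ring
  have hsum2 : Summable (fun m : ℕ => |bc ν m| * (x/2)^ν) := hsumabs.mul_right _
  have hsumnorm : Summable (fun m : ℕ => ‖bc ν m * (x/2)^(2*(m:ℝ)+ν)‖) :=
    Summable.of_nonneg_of_le (fun m => norm_nonneg _) hterm hsum2
  calc |Jr ν x| = ‖∑' m : ℕ, bc ν m * (x/2)^(2*(m:ℝ)+ν)‖ := (Real.norm_eq_abs _).symm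
    _ ≤ ∑' m : ℕ, ‖bc ν m * (x/2)^(2*(m:ℝ)+ν)‖ := norm_tsum_le_tsum_norm hsumnorm
    _ ≤ ∑' m : ℕ, |bc ν m| * (x/2)^ν := Summable.tsum_le_tsum hterm hsumnorm hsum2
    _ = (∑' m : ℕ, |bc ν m|) * (x/2)^ν := tsum_mul_right
    _ ≤ ((∑' m : ℕ, |bc ν m|) + 1) * (x/2)^ν := by
        gcongr
        linarith

/-- For every real `ν` and `x > 0`,
`|J_ν'(x)| ≤ c_ν x^{ν-1} (1+x)^{-ν+1/2}` for some constant `c_ν` depending only on `ν`,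
where `J_ν'(x) = J_{ν-1}(x) − ν J_ν(x)/x`. -/
theorem besselJ_deriv_bound (ν : ℝ) :
    ∃ c : ℝ, 0 < c ∧ ∀ x : ℝ, 0 < x →
      |besselJDeriv ν x| ≤ c * x ^ (ν - 1) * (1 + x) ^ (-ν + 1/2) := by
  obtain ⟨B1, hB1, hB1b⟩ := Jr_decay (ν-1)
  obtain ⟨B2, hB2, hB2b⟩ := Jr_decay ν
  obtain ⟨A1, hA1, hA1b⟩ := Jr_small (ν-1)
  obtain ⟨A2, hA2, hA2b⟩ := Jr_small ν
  set κ := min 1 ((2:ℝ)^(-ν+1/2)) with hκdef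
  have hκ : 0 < κ := lt_min one_pos (Real.rpow_pos_of_pos two_pos _)
  set S := B1 + |ν| * B2 + A1 * (2:ℝ)^(1-ν) + |ν| * A2*(2:ℝ)^(-ν) + 1 with hSdef
  have hS1 : 0 ≤ |ν| * B2 := mul_nonneg (abs_nonneg _) hB2.le
  have hS2 : 0 ≤ A1 * (2:ℝ)^(1-ν) := mul_nonneg hA1.le (Real.rpow_pos_of_pos two_pos _).le
  have hS3 : 0 ≤ |ν| * A2*(2:ℝ)^(-ν) :=
    mul_nonneg (mul_nonneg (abs_nonneg _) hA2.le) (Real.rpow_pos_of_pos two_pos _).le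
  have hSpos : 0 < S := by rw [hSdef]; linarith
  refine ⟨S/κ, by positivity, fun x hx => ?_⟩
  have hcκ : S/κ * κ = S := by field_simp
  have hbjd : |besselJDeriv ν x| ≤ |Jr (ν-1) x| + |ν| * |Jr ν x| / x := by
    rw [besselJDeriv, besselJ_eq' (ν-1) x hx, besselJ_eq' ν x hx]
    calc |Jr (ν-1) x - ν * Jr ν x / x| ≤ |Jr (ν-1) x| + |ν * Jr ν x / x| := abs_sub _ _
      _ = |Jr (ν-1) x| + |ν| * |Jr ν x| / x := by
          rw [abs_div, abs_mul, abs_of_pos hx]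
  rcases le_or_gt x 1 with hx1 | hx1
  · -- small x
    have h1 := hA1b x hx hx1
    have h2 := hA2b x hx hx1
    have hconv : ∀ (p A : ℝ), A * (x/2)^p = A * (2:ℝ)^(-p) * x^p := by
      intro p A
      rw [div_eq_mul_inv, Real.mul_rpow hx.le (by norm_num),
        Real.inv_rpow (by norm_num), ← Real.rpow_neg (by norm_num)]
      ring
    have hxν : x^ν / x = x^(ν-1) := by
      rw [div_eq_mul_inv, ← Real.rpow_neg_one x, ← Real.rpow_add hx,
        show ν + -1 = ν - 1 by ring]
    have t1 : A1 * (x/2)^(ν-1) = A1 * (2:ℝ)^(1-ν) * x^(ν-1) := by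
      rw [hconv (ν-1) A1, show -(ν-1) = 1-ν by ring]
    have t2 : |ν| * (A2 * (x/2)^ν) / x = |ν| * A2*(2:ℝ)^(-ν) * x^(ν-1) := by
      rw [hconv ν A2,
        show |ν| * (A2*(2:ℝ)^(-ν) * x^ν) / x = |ν| * A2*(2:ℝ)^(-ν) * (x^ν/x) by ring, hxν]
    have hκle : κ ≤ (1+x)^(-ν+1/2) := by
      rcases le_or_gt 0 (-ν+1/2) with he | he
      · refine (min_le_left _ _).trans ?_
        nth_rewrite 1 [← Real.one_rpow (-ν+1/2)]
        exact Real.rpow_le_rpow zero_le_one (show (1:ℝ) ≤ 1+x by linarith) he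
      · refine (min_le_right _ _).trans ?_
        exact Real.rpow_le_rpow_of_nonpos (show (0:ℝ) < 1+x by linarith)
          (show (1:ℝ)+x ≤ 2 by linarith) he.le
    calc |besselJDeriv ν x| ≤ |Jr (ν-1) x| + |ν| * |Jr ν x| / x := hbjd
      _ ≤ A1 * (x/2)^(ν-1) + |ν| * (A2 * (x/2)^ν) / x := by gcongr
      _ = (A1 * (2:ℝ)^(1-ν) + |ν| * A2*(2:ℝ)^(-ν)) * x^(ν-1) := by rw [t1, t2]; ring
      _ ≤ S * x^(ν-1) :=
          mul_le_mul_of_nonneg_right (by rw [hSdef]; linarith) (Real.rpow_nonneg hx.le _)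
      _ = (S/κ) * κ * x^(ν-1) := by rw [hcκ]
      _ ≤ (S/κ) * (1+x)^(-ν+1/2) * x^(ν-1) :=
          mul_le_mul_of_nonneg_right
            (mul_le_mul_of_nonneg_left hκle (by positivity)) (Real.rpow_nonneg hx.le _)
      _ = S/κ * x^(ν-1) * (1+x)^(-ν+1/2) := by ring
  · -- large x
    have hx1' : (1:ℝ) ≤ x := hx1.le
    have h1 := hB1b x hx1'
    have h2 := hB2b x hx1'
    have hsx : 0 < Real.sqrt x := Real.sqrt_pos.mpr hx
    have key : |besselJDeriv ν x| ≤ (B1 + |ν| * B2) / Real.sqrt x := by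
      calc |besselJDeriv ν x| ≤ |Jr (ν-1) x| + |ν| * |Jr ν x| / x := hbjd
        _ ≤ B1/Real.sqrt x + |ν| * (B2/Real.sqrt x) / x := by gcongr
        _ ≤ B1/Real.sqrt x + |ν| * (B2/Real.sqrt x) / 1 :=
            add_le_add_right (div_le_div_of_nonneg_left (by positivity) one_pos hx1') _
        _ = (B1 + |ν| * B2) / Real.sqrt x := by ring
    have hinv : (B1 + |ν| * B2) / Real.sqrt x = (B1 + |ν| * B2) * x^(-(1/2) : ℝ) := by
      rw [Real.sqrt_eq_rpow, div_eq_mul_inv, ← Real.rpow_neg hx.le]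
    have hxsplit : x^(ν-1) * x^(-ν+1/2) = x^(-(1/2) : ℝ) := by
      rw [← Real.rpow_add hx, show (ν-1)+(-ν+1/2) = -(1/2 : ℝ) by ring]
    have hrx : κ * x^(-ν+1/2) ≤ (1+x)^(-ν+1/2) := by
      rcases le_or_gt 0 (-ν+1/2) with he | he
      · have h' : x^(-ν+1/2) ≤ (1+x)^(-ν+1/2) := Real.rpow_le_rpow hx.le (by linarith) he
        calc κ * x^(-ν+1/2) ≤ 1 * x^(-ν+1/2) :=
              mul_le_mul_of_nonneg_right (min_le_left _ _) (Real.rpow_nonneg hx.le _)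
          _ ≤ (1+x)^(-ν+1/2) := by rw [one_mul]; exact h'
      · have h2x : (1+x) ≤ 2*x := by linarith
        have hmul : ((2*x : ℝ))^(-ν+1/2) = 2^(-ν+1/2) * x^(-ν+1/2) :=
          Real.mul_rpow (by norm_num) hx.le
        calc κ * x^(-ν+1/2) ≤ 2^(-ν+1/2) * x^(-ν+1/2) :=
              mul_le_mul_of_nonneg_right (min_le_right _ _) (Real.rpow_nonneg hx.le _)
          _ = (2*x)^(-ν+1/2) := hmul.symm
          _ ≤ (1+x)^(-ν+1/2) := Real.rpow_le_rpow_of_nonpos (by positivity) h2x he.le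
    calc |besselJDeriv ν x| ≤ (B1 + |ν| * B2) * x^(-(1/2) : ℝ) := key.trans_eq hinv
      _ ≤ S * x^(-(1/2) : ℝ) :=
          mul_le_mul_of_nonneg_right (by rw [hSdef]; linarith) (Real.rpow_nonneg hx.le _)
      _ = (S/κ) * κ * (x^(ν-1) * x^(-ν+1/2)) := by rw [hcκ, hxsplit]
      _ = (S/κ) * x^(ν-1) * (κ * x^(-ν+1/2)) := by ring
      _ ≤ (S/κ) * x^(ν-1) * (1+x)^(-ν+1/2) :=
          mul_le_mul_of_nonneg_left hrx (by positivity)
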